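/- arXiv:2403.00536 — 2 statements merged into one kernel-verified Lean document; each statement's English description precedes it below -/
import Mathlib

section
/- Let I be a finite set of items with sizes a_i > 0 and profits p_i ≥ 0, let C > 0, and suppose ∑_{i∈I} a_i ≤ C. Let 0 < δ < 1 and let a_max = max_i a_i. Then there exists a subset I' ⊆ I with ∑_{i∈I'} a_i ≤ (1-δ)C + a_max and ∑_{i∈I'} p_i ≥ (1-δ) ∑_{i∈I} p_i. -/
/-- Key lemma: with budget `B ≥ 0`, there is a subset of size at most `B + a_max`
whose profit is at least a `min B A / A` fraction of the total profit. -/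
lemma knap_aux {ι : Type*} [DecidableEq ι] (a p : ι → ℝ) (B : ℝ) (hB : 0 ≤ B) :
    ∀ n (I : Finset ι), I.card = n → ∀ (hne : I.Nonempty),
      (∀ i ∈ I, 0 < a i) → (∀ i ∈ I, 0 ≤ p i) →
      ∃ I' ⊆ I, (∑ i ∈ I', a i ≤ B + I.sup' hne a) ∧
        min B (∑ i ∈ I, a i) * ∑ i ∈ I, p i ≤ (∑ i ∈ I', p i) * ∑ i ∈ I, a i := by
  intro n
  induction n using Nat.strong_induction_on with
  | _ n IH =>
    intro I hcard hne ha hp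
    have hP : 0 ≤ ∑ i ∈ I, p i := Finset.sum_nonneg hp
    have hA : 0 < ∑ i ∈ I, a i :=
      Finset.sum_pos ha hne
    by_cases hbig : ∑ i ∈ I, a i ≤ B + I.sup' hne a
    · refine ⟨I, le_refl _, hbig, ?_⟩
      have : min B (∑ i ∈ I, a i) ≤ ∑ i ∈ I, a i := min_le_right _ _
      nlinarith
    · push_neg at hbig
      obtain ⟨i, hiI, hmin⟩ := Finset.exists_min_image I (fun j => p j / a j) hne
      have hai : 0 < a i := ha i hiI
      have hsup : a i ≤ I.sup' hne a := Finset.le_sup' a hiI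
      -- min density: p i * ∑ a ≤ a i * ∑ p
      have hdens : p i * ∑ j ∈ I, a j ≤ a i * ∑ j ∈ I, p j := by
        have h1 : ∀ j ∈ I, p i * a j ≤ p j * a i := by
          intro j hjI
          have haj : 0 < a j := ha j hjI
          have := hmin j hjI
          rw [div_le_div_iff₀ hai haj] at this
          linarith
        calc p i * ∑ j ∈ I, a j = ∑ j ∈ I, p i * a j := by rw [Finset.mul_sum]
          _ ≤ ∑ j ∈ I, p j * a i := Finset.sum_le_sum h1
          _ = a i * ∑ j ∈ I, p j := by rw [← Finset.sum_mul]; ring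
      set I'' := I.erase i with hI''
      have hsub : I'' ⊆ I := Finset.erase_subset _ _
      have hAsplit : a i + ∑ j ∈ I'', a j = ∑ j ∈ I, a j :=
        Finset.add_sum_erase I a hiI
      have hPsplit : p i + ∑ j ∈ I'', p j = ∑ j ∈ I, p j :=
        Finset.add_sum_erase I p hiI
      have hA''pos : 0 < ∑ j ∈ I'', a j := by
        have : a i ≤ I.sup' hne a := hsup
        nlinarith
      have hne'' : I''.Nonempty := by
        by_contra h
        rw [Finset.not_nonempty_iff_eq_empty] at h
        rw [h, Finset.sum_empty] at hA''pos
        exact lt_irrefl 0 hA''pos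
      have hcard'' : I''.card = n - 1 := by
        rw [hI'', Finset.card_erase_of_mem hiI, hcard]
      have hnpos : 0 < n := by
        rw [← hcard]
        exact Finset.card_pos.mpr hne
      obtain ⟨I', hI'sub, hsize, hprofit⟩ :=
        IH (n - 1) (Nat.sub_lt hnpos one_pos) I'' hcard'' hne''
          (fun j hj => ha j (hsub hj)) (fun j hj => hp j (hsub hj))
      refine ⟨I', hI'sub.trans hsub, ?_, ?_⟩
      · have hsuple : I''.sup' hne'' a ≤ I.sup' hne a :=
          Finset.sup'_le hne'' a (fun j hj => Finset.le_sup' a (hsub hj))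
        linarith
      · -- min B (∑ I'' a) = B since B < ∑ I'' a
        have hBlt : B < ∑ j ∈ I'', a j := by nlinarith
        have hminB'' : min B (∑ j ∈ I'', a j) = B := min_eq_left hBlt.le
        rw [hminB''] at hprofit
        have hminB : min B (∑ j ∈ I, a j) = B := by
          apply min_eq_left
          nlinarith
        rw [hminB]
        have hP' : 0 ≤ ∑ j ∈ I', p j :=
          Finset.sum_nonneg (fun j hj => hp j (hsub (hI'sub hj)))
        -- (∑ I'' p) * (∑ I a) ≥ (∑ I p) * (∑ I'' a)
        have hkey : (∑ j ∈ I, p j) * (∑ j ∈ I'', a j) ≤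
            (∑ j ∈ I'', p j) * (∑ j ∈ I, a j) := by nlinarith
        nlinarith [mul_le_mul_of_nonneg_left hkey hB,
          mul_le_mul_of_nonneg_right hprofit hA.le]

/-- Scaling the knapsack capacity by `(1-δ)` loses at most a `δ`-fraction of the
profit, up to one extra item of maximal size. -/
theorem stmt_6 {ι : Type*} [DecidableEq ι] (I : Finset ι) (hne : I.Nonempty)
    (a p : ι → ℝ) (ha : ∀ i ∈ I, 0 < a i) (hp : ∀ i ∈ I, 0 ≤ p i)
    (C : ℝ) (hC : 0 < C) (hcap : ∑ i ∈ I, a i ≤ C)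
    (δ : ℝ) (hδ : 0 < δ) (hδ' : δ < 1) :
    ∃ I' ⊆ I, (∑ i ∈ I', a i ≤ (1 - δ) * C + I.sup' hne a) ∧
      (1 - δ) * ∑ i ∈ I, p i ≤ ∑ i ∈ I', p i := by
  have hB : 0 ≤ (1 - δ) * C := by nlinarith
  obtain ⟨I', hsub, hsize, hprofit⟩ :=
    knap_aux a p ((1 - δ) * C) hB I.card I rfl hne ha hp
  refine ⟨I', hsub, hsize, ?_⟩
  have hA : 0 < ∑ i ∈ I, a i := Finset.sum_pos ha hne
  have hP : 0 ≤ ∑ i ∈ I, p i := Finset.sum_nonneg hp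
  have hmin : (1 - δ) * ∑ i ∈ I, a i ≤ min ((1 - δ) * C) (∑ i ∈ I, a i) := by
    apply le_min
    · nlinarith
    · nlinarith
  have := le_trans (mul_le_mul_of_nonneg_right hmin hP) hprofit
  nlinarith
end

section
/- Let B be a d-dimensional box with side lengths ℓ_1,...,ℓ_d and let I be a set of hypercube items with side lengths s_i such that s_i ≤ ε · min_{d'} ℓ_{d'} for all i ∈ I, where 0 < ε < 1/2^(d+2), and suppose the items of I can be packed disjointly into B. Then there exists I' ⊆ I with p(I') ≥ (1 - (2d+1)ε)(1+ε)^(-d) · p(I) and ∑_{i∈I'} ⌈s_i⌉_{1+ε}^d ≤ VOL_d(B) - 2dε · VOL_d(B). -/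
noncomputable def ceilPow (ε x : ℝ) : ℝ := (1 + ε) ^ ⌈Real.logb (1 + ε) x⌉

lemma ceilPow_pos {ε x : ℝ} (hε : 0 < ε) : 0 < ceilPow ε x :=
  zpow_pos (by linarith) _

lemma le_ceilPow {ε x : ℝ} (hε : 0 < ε) (hx : 0 < x) : x ≤ ceilPow ε x := by
  have hb : (1:ℝ) < 1 + ε := by linarith
  have h0 : x = (1+ε) ^ (Real.logb (1+ε) x) :=
    (Real.rpow_logb (by linarith) (by linarith) hx).symm
  have h1 : (1+ε) ^ (Real.logb (1+ε) x) ≤ (1+ε) ^ ((⌈Real.logb (1+ε) x⌉ : ℝ)) :=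
    Real.rpow_le_rpow_of_exponent_le (le_of_lt hb) (Int.le_ceil _)
  calc x = (1+ε) ^ (Real.logb (1+ε) x) := h0
    _ ≤ (1+ε) ^ ((⌈Real.logb (1+ε) x⌉ : ℝ)) := h1
    _ = ceilPow ε x := by rw [ceilPow, Real.rpow_intCast]

lemma ceilPow_le {ε x : ℝ} (hε : 0 < ε) (hx : 0 < x) : ceilPow ε x ≤ (1+ε) * x := by
  have hb : (1:ℝ) < 1 + ε := by linarith
  have h1 : (1+ε) ^ ((⌈Real.logb (1+ε) x⌉ : ℝ)) ≤ (1+ε) ^ (Real.logb (1+ε) x + 1) :=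
    Real.rpow_le_rpow_of_exponent_le (le_of_lt hb) (by
      have := Int.ceil_lt_add_one (Real.logb (1+ε) x); linarith)
  have h0 : (1+ε) ^ (Real.logb (1+ε) x + 1) = (1+ε) * x := by
    rw [Real.rpow_add (by linarith), Real.rpow_logb (by linarith) (by linarith) hx,
      Real.rpow_one]; ring
  calc ceilPow ε x = (1+ε) ^ ((⌈Real.logb (1+ε) x⌉ : ℝ)) := by
        rw [ceilPow, Real.rpow_intCast]
    _ ≤ (1+ε) * x := h0 ▸ h1

open Finset in
lemma greedy_select {ι : Type*} [DecidableEq ι] (c p : ι → ℝ) :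
    ∀ (X : Finset ι), (∀ i ∈ X, 0 < c i) → ∀ (t : ℝ), 0 ≤ t →
    (∑ i ∈ X, c i) ≤ t ∨
      ∃ (L : Finset ι) (w : ι), L ⊆ X ∧ w ∈ X ∧ w ∉ L ∧
        (∑ i ∈ L, c i) ≤ t ∧ t < (∑ i ∈ L, c i) + c w ∧
        (∀ i ∈ L, p w * c i ≤ p i * c w) ∧
        (∀ j ∈ X, j ∉ L → p j * c w ≤ p w * c j) := by
  intro X
  induction X using Finset.strongInduction with
  | _ X ih =>
    intro hc t ht
    rcases X.eq_empty_or_nonempty with rfl | hne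
    · left; simpa using ht
    · obtain ⟨w0, hw0X, hw0⟩ := Finset.exists_max_image X (fun i => p i / c i) hne
      by_cases hall : (∑ i ∈ X, c i) ≤ t
      · left; exact hall
      · right
        have hdens : ∀ j ∈ X, p j * c w0 ≤ p w0 * c j := by
          intro j hj
          have h1 : p j / c j ≤ p w0 / c w0 := hw0 j hj
          have hcj := hc j hj; have hcw := hc w0 hw0X
          rw [div_le_div_iff₀ hcj hcw] at h1; linarith
        by_cases hbig : t < c w0
        · refine ⟨∅, w0, empty_subset _, hw0X, notMem_empty _, by simpa using ht, by
            simpa using hbig, by simp, fun j hj _ => hdens j hj⟩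
        · push_neg at hbig
          have hw0pos := hc w0 hw0X
          have hsub : X.erase w0 ⊂ X := Finset.erase_ssubset hw0X
          have ht' : 0 ≤ t - c w0 := by linarith
          rcases ih _ hsub (fun i hi => hc i (Finset.mem_of_mem_erase hi)) (t - c w0) ht' with
            h | ⟨L, w, hLX, hwX, hwL, hLle, hLlt, hLd, hXd⟩
          · exfalso
            have := Finset.add_sum_erase X c hw0X
            linarith
          · refine ⟨insert w0 L, w, ?_, Finset.mem_of_mem_erase hwX, ?_, ?_, ?_, ?_, ?_⟩
            · intro i hi
              rcases Finset.mem_insert.1 hi with rfl | hi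
              · exact hw0X
              · exact Finset.mem_of_mem_erase (hLX hi)
            · intro hw
              rcases Finset.mem_insert.1 hw with rfl | hw
              · exact (Finset.mem_erase.1 hwX).1 rfl
              · exact hwL hw
            · have hw0L : w0 ∉ L := fun h => (Finset.mem_erase.1 (hLX h)).1 rfl
              rw [Finset.sum_insert hw0L]; linarith
            · have hw0L : w0 ∉ L := fun h => (Finset.mem_erase.1 (hLX h)).1 rfl
              rw [Finset.sum_insert hw0L]; linarith
            · intro i hi
              rcases Finset.mem_insert.1 hi with rfl | hi
              · exact hdens w (Finset.mem_of_mem_erase hwX)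
              · exact hLd i hi
            · intro j hj hjL
              by_cases hj0 : j = w0
              · exact absurd (Finset.mem_insert_self w0 L) (hj0 ▸ hjL)
              · exact hXd j (Finset.mem_erase.2 ⟨hj0, hj⟩)
                  (fun h => hjL (Finset.mem_insert_of_mem h))


lemma pow_interval_eq {ε y : ℝ} (hε : 0 < ε) (hy : 0 < y) (a b : ℤ)
    (ha1 : y < (1+ε)^a) (ha2 : (1+ε)^a ≤ (1+ε)*y)
    (hb1 : y < (1+ε)^b) (hb2 : (1+ε)^b ≤ (1+ε)*y) : ((1:ℝ)+ε)^a = (1+ε)^b := by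
  have hb' : (1:ℝ) ≤ 1 + ε := by linarith
  have key : ∀ m n : ℤ, m < n → ((1:ℝ)+ε)^n ≤ (1+ε)*y → y < (1+ε)^m → False := by
    intro m n hmn h2 h1
    have h3 : ((1:ℝ)+ε)^(m+1) ≤ (1+ε)^n := zpow_le_zpow_right₀ hb' (by omega)
    have h4 : ((1:ℝ)+ε)^(m+1) = (1+ε)*(1+ε)^m := by
      rw [zpow_add_one₀ (by linarith : (1:ℝ)+ε ≠ 0)]; ring
    nlinarith
  rcases lt_trichotomy a b with h | h | h
  · exact absurd (key a b h hb2 ha1) not_false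
  · rw [h]
  · exact absurd (key b a h ha2 hb1) not_false

set_option maxHeartbeats 1000000 in
/-- Selection of items for an S-box: if all hypercube items packed in a box `B` are
small compared with `B`, a subset of almost all the profit can be chosen whose
rounded volume is at most `(1 - 2dε)·VOL(B)`. -/
theorem stmt_7 {ι : Type*} (d : ℕ) (hd : 1 ≤ d) (ε : ℝ) (hε : 0 < ε)
    (hε' : ε < 1 / 2 ^ (d + 2)) (ℓ : Fin d → ℝ) (hℓ : ∀ j, 0 < ℓ j)
    (I : Finset ι) (s p : ι → ℝ)
    (hs : ∀ i ∈ I, 0 < s i) (hp : ∀ i ∈ I, 0 ≤ p i)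
    (hsmall : ∀ i ∈ I, ∀ j, s i ≤ ε * ℓ j)
    (hvol : ∑ i ∈ I, (s i) ^ d ≤ ∏ j, ℓ j) :
    ∃ I' ⊆ I,
      (1 - (2 * d + 1) * ε) * (1 + ε) ^ (-(d : ℤ)) * (∑ i ∈ I, p i)
        ≤ ∑ i ∈ I', p i ∧
      ∑ i ∈ I', (ceilPow ε (s i)) ^ d
        ≤ (∏ j, ℓ j) - 2 * d * ε * (∏ j, ℓ j) := by
  classical
  have hVpos0 : 0 < ∏ j, ℓ j := Finset.prod_pos (fun j _ => hℓ j)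
  obtain ⟨V, hVdef⟩ : ∃ x : ℝ, (∏ j, ℓ j) = x := ⟨_, rfl⟩
  rw [hVdef] at hvol ⊢
  have hVpos : 0 < V := hVdef ▸ hVpos0
  obtain ⟨c, hcdef⟩ : ∃ f : ι → ℝ, ∀ i, (ceilPow ε (s i))^d = f i := ⟨_, fun _ => rfl⟩
  simp only [hcdef]
  obtain ⟨th, hthdef⟩ : ∃ x : ℝ, (1 - (2 * d + 1) * ε) * (1 + ε) ^ (-(d : ℤ)) = x := ⟨_, rfl⟩
  rw [hthdef]
  -- basic numeric facts
  have hb1 : (1:ℝ) < 1 + ε := by linarith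
  have hpowd : (0:ℝ) < (1+ε)^d := pow_pos (by linarith) d
  have hε2 : (2 * d + 1 : ℝ) * ε ≤ 1/2 := by
    have h1 : (2 * d + 1 : ℕ) < 2 ^ (d+1) := by
      clear * - hd
      induction d with
      | zero => omega
      | succ n ihn =>
        rcases Nat.eq_or_lt_of_le hd with h | h
        · simp [← h]
        · have := ihn (by omega); ring_nf; ring_nf at this; omega
    have h2 : ((2 * d + 1 : ℕ) : ℝ) ≤ (2:ℝ)^(d+1) - 1 := by
      have : ((2 * d + 1 : ℕ) : ℝ) + 1 ≤ ((2:ℕ):ℝ)^(d+1) := by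
        exact_mod_cast Nat.succ_le_of_lt h1
      push_cast at this ⊢; linarith
    have h01 : (1:ℝ) ≤ 2^(d+1) := one_le_pow₀ (by norm_num)
    have h3 : (2 * d + 1 : ℝ) * ε ≤ ((2:ℝ)^(d+1) - 1) * (1 / 2^(d+2)) := by
      apply mul_le_mul _ (le_of_lt hε') (le_of_lt hε) (by linarith)
      · push_cast at h2 ⊢; linarith
    have h4 : ((2:ℝ)^(d+1) - 1) * (1 / 2^(d+2)) ≤ 1/2 := by
      have h2P : (2:ℝ)^(d+2) = 2^(d+1)*2 := by ring
      rw [h2P, mul_one_div, div_le_div_iff₀ (by positivity) (by norm_num : (0:ℝ) < 2)]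
      nlinarith [pow_pos (by norm_num : (0:ℝ) < 2) (d+1)]
    linarith
  have hdε : 2 * (d:ℝ) * ε ≤ 1/2 := by linarith [hε.le]
  have hzpow : ((1:ℝ)+ε) ^ (-(d:ℤ)) = ((1+ε)^d)⁻¹ := by
    rw [zpow_neg, zpow_natCast]
  have hth_pos : 0 ≤ th := by
    rw [← hthdef]
    apply mul_nonneg (by linarith) (le_of_lt (zpow_pos (by linarith) _))
  have hth_mul : th * (1+ε)^d = 1 - (2*d+1)*ε := by
    rw [← hthdef, hzpow, mul_assoc, inv_mul_cancel₀ (ne_of_gt hpowd), mul_one]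
  have hth1 : th ≤ 1 := by
    rw [← hthdef, hzpow]
    rw [mul_inv_le_iff₀ hpowd, one_mul]
    have h5 : (1:ℝ) ≤ (1+ε)^d := one_le_pow₀ (by linarith)
    have h6 : (0:ℝ) ≤ (2*(d:ℝ)+1)*ε := by positivity
    linarith
  -- item facts
  have hcpos : ∀ i ∈ I, 0 < c i := fun i _ => hcdef i ▸ pow_pos (ceilPow_pos hε) d
  have hcs : ∀ i ∈ I, (s i)^d ≤ c i := fun i hi =>
    hcdef i ▸ pow_le_pow_left₀ (hs i hi).le (le_ceilPow hε (hs i hi)) d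
  have hcs' : ∀ i ∈ I, c i ≤ (1+ε)^d * (s i)^d := by
    intro i hi
    have h7 := pow_le_pow_left₀ (ceilPow_pos hε (x := s i)).le (ceilPow_le hε (hs i hi)) d
    calc c i = (ceilPow ε (s i))^d := (hcdef i).symm
      _ ≤ ((1+ε) * s i)^d := h7
      _ = (1+ε)^d * (s i)^d := mul_pow _ _ _
  have hsvol : ∀ i ∈ I, (s i)^d ≤ ε^d * V := by
    intro i hi
    have h1 : (s i)^d = ∏ _j : Fin d, s i := by
      rw [Finset.prod_const, Finset.card_univ, Fintype.card_fin]
    have h2 : (∏ _j : Fin d, s i) ≤ ∏ j, (ε * ℓ j) :=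
      Finset.prod_le_prod (fun j _ => (hs i hi).le) (fun j _ => hsmall i hi j)
    have h3 : (∏ j, (ε * ℓ j)) = ε^d * V := by
      rw [Finset.prod_mul_distrib, Finset.prod_const, Finset.card_univ, Fintype.card_fin, hVdef]
    rw [h1]; rw [h3] at h2; exact h2
  have hcεV : ∀ i ∈ I, c i ≤ ((1+ε)*ε)^d * V := by
    intro i hi
    calc c i ≤ (1+ε)^d * (s i)^d := hcs' i hi
      _ ≤ (1+ε)^d * (ε^d * V) := by
          exact mul_le_mul_of_nonneg_left (hsvol i hi) (le_of_lt hpowd)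
      _ = ((1+ε)*ε)^d * V := by rw [mul_pow]; ring
  obtain ⟨S, hSdef⟩ : ∃ x : ℝ, ∑ i ∈ I, (s i)^d = x := ⟨_, rfl⟩
  obtain ⟨A, hAdef⟩ : ∃ x : ℝ, ∑ i ∈ I, c i = x := ⟨_, rfl⟩
  rw [hSdef] at hvol
  have hS0 : 0 ≤ S := hSdef ▸ Finset.sum_nonneg (fun i hi => pow_nonneg (hs i hi).le d)
  have hAS : A ≤ (1+ε)^d * S := by
    rw [← hAdef, ← hSdef, Finset.mul_sum]
    exact Finset.sum_le_sum hcs'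
  have hAV : A ≤ (1+ε)^d * V :=
    hAS.trans (mul_le_mul_of_nonneg_left hvol (le_of_lt hpowd))
  have hT0 : 0 ≤ V - 2 * d * ε * V := by
    have h1 : (2 * (d:ℝ) * ε) * V ≤ (1/2) * V := mul_le_mul_of_nonneg_right hdε hVpos.le
    linarith [hVpos.le]
  have hpI0 : 0 ≤ ∑ i ∈ I, p i := Finset.sum_nonneg hp
  have hthA : th * A ≤ (1 - (2*d+1)*ε) * V := by
    calc th * A ≤ th * ((1+ε)^d * V) := mul_le_mul_of_nonneg_left hAV hth_pos
      _ = (th * (1+ε)^d) * V := by ring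
      _ = (1 - (2*d+1)*ε) * V := by rw [hth_mul]
  by_cases hcase : A ≤ V - 2 * d * ε * V
  · refine ⟨I, Finset.Subset.refl I, ?_, hAdef ▸ hcase⟩
    calc th * (∑ i ∈ I, p i) ≤ 1 * (∑ i ∈ I, p i) :=
        mul_le_mul_of_nonneg_right hth1 hpI0
      _ = ∑ i ∈ I, p i := one_mul _
  · push_neg at hcase
    rcases greedy_select c p I hcpos (V - 2 * d * ε * V) hT0 with h |
      ⟨Pre, o, hPreI, hoI, hoPre, hcPre, hcPreo, hdL, hdX⟩
    · rw [hAdef] at h; exact absurd h (not_le.mpr hcase)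
    -- decompose I = Pre ∪ {o} ∪ Out
    set Out : Finset ι := (I \ Pre).erase o with hOutdef
    have hoIP : o ∈ I \ Pre := Finset.mem_sdiff.2 ⟨hoI, hoPre⟩
    have hIns : insert o Out = I \ Pre := Finset.insert_erase hoIP
    have hOutI : ∀ j ∈ Out, j ∈ I ∧ j ∉ Pre := by
      intro j hj
      have := Finset.mem_of_mem_erase hj
      exact ⟨(Finset.mem_sdiff.1 this).1, (Finset.mem_sdiff.1 this).2⟩
    have hsplit : ∀ f : ι → ℝ, ∑ i ∈ I, f i = ∑ i ∈ Pre, f i + f o + ∑ i ∈ Out, f i := by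
      intro f
      have h1 : ∑ i ∈ I \ Pre, f i + ∑ i ∈ Pre, f i = ∑ i ∈ I, f i :=
        Finset.sum_sdiff hPreI
      have h2 : ∑ i ∈ I \ Pre, f i = f o + ∑ i ∈ Out, f i := by
        rw [← hIns, Finset.sum_insert (Finset.notMem_erase o _)]
      linarith
    obtain ⟨CP, hCP⟩ : ∃ x : ℝ, ∑ i ∈ Pre, c i = x := ⟨_, rfl⟩
    obtain ⟨CO, hCO⟩ : ∃ x : ℝ, ∑ i ∈ Out, c i = x := ⟨_, rfl⟩
    obtain ⟨PP, hPP⟩ : ∃ x : ℝ, ∑ i ∈ Pre, p i = x := ⟨_, rfl⟩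
    obtain ⟨PO, hPO⟩ : ∃ x : ℝ, ∑ i ∈ Out, p i = x := ⟨_, rfl⟩
    rw [hCP] at hcPre hcPreo
    have hpo0 : 0 ≤ p o := hp o hoI
    have hco0 : 0 < c o := hcpos o hoI
    have hpPre0 : 0 ≤ PP := hPP ▸ Finset.sum_nonneg (fun i hi => hp i (hPreI hi))
    have hcPre0 : 0 ≤ CP := hCP ▸ Finset.sum_nonneg (fun i hi => (hcpos i (hPreI hi)).le)
    have hcOut0 : 0 ≤ CO := hCO ▸ Finset.sum_nonneg (fun i hi => (hcpos i (hOutI i hi).1).le)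
    have hpOut0 : 0 ≤ PO := hPO ▸ Finset.sum_nonneg (fun i hi => hp i (hOutI i hi).1)
    -- density sums
    have hf1 : p o * CP ≤ PP * c o := by
      rw [← hCP, ← hPP, Finset.mul_sum, Finset.sum_mul]
      exact Finset.sum_le_sum (fun i hi => hdL i hi)
    have hf2 : PO * c o ≤ p o * CO := by
      rw [← hCO, ← hPO, Finset.mul_sum, Finset.sum_mul]
      exact Finset.sum_le_sum (fun i hi => hdX i (hOutI i hi).1 (hOutI i hi).2)
    have hAsplit : A = CP + c o + CO := by
      rw [← hAdef, ← hCP, ← hCO, hsplit c]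
    have hpIsplit : ∑ i ∈ I, p i = PP + p o + PO := by
      rw [← hPP, ← hPO, hsplit p]
    rw [hpIsplit]
    by_cases hbig : c o ≤ ε * V
    · -- small pivot : take Pre
      refine ⟨Pre, hPreI, ?_, by rw [hCP]; exact hcPre⟩
      rw [hPP]
      have hkey : th * A ≤ CP := by
        have h3 : (1 - (2*d+1)*ε) * V = (V - 2*d*ε*V) - ε * V := by ring
        linarith [hthA]
      have e1 : th * (PO * c o) ≤ th * (p o * CO) :=
        mul_le_mul_of_nonneg_left hf2 hth_pos
      have e2 : (1 - th) * (p o * CP) ≤ (1 - th) * (PP * c o) :=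
        mul_le_mul_of_nonneg_left hf1 (by linarith)
      have e3 : 0 ≤ p o * (CP - th * (CP + c o + CO)) := by
        apply mul_nonneg hpo0
        rw [← hAsplit]; linarith
      have hgoal : (th * (PP + p o + PO)) * c o ≤ PP * c o := by linarith only [e1, e2, e3]
      exact le_of_mul_le_mul_right hgoal hco0
    · push_neg at hbig
      -- the pivot is big; this forces d = 1
      have hd1 : d = 1 := by
        by_contra hne
        have hd2 : 2 ≤ d := by omega
        have hε16 : ε < 1/16 := by
          have h1 : (2:ℝ)^4 ≤ 2^(d+2) := by
            apply pow_le_pow_right₀ (by norm_num) (by omega)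
          have h2 : (1:ℝ)/2^(d+2) ≤ 1/2^4 := by
            apply div_le_div_of_nonneg_left (by norm_num) (by positivity) h1
          have h3 : (1:ℝ)/2^4 = 1/16 := by norm_num
          linarith only [hε', h2, h3]
        have hεone : ε ≤ 1 := by linarith only [hε16]
        have h1 : (1+ε)*ε ≤ 2*ε := by
          have t1 : 0 ≤ ε * (1-ε) := mul_nonneg hε.le (by linarith only [hεone])
          nlinarith only [t1]
        have h2 : ((1+ε)*ε)^d ≤ (2*ε)^d :=
          pow_le_pow_left₀ (by positivity) h1 d
        have h3 : (2*ε)^d ≤ (2*ε)^2 := by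
          apply pow_le_pow_of_le_one (by positivity) (by linarith) hd2
        have h4 : (2*ε)^2 ≤ ε := by
          have t1 : 0 ≤ ε * (1-4*ε) := mul_nonneg hε.le (by linarith only [hε16])
          nlinarith only [t1]
        have h5 := hcεV o hoI
        have : c o ≤ ε * V := by
          calc c o ≤ ((1+ε)*ε)^d * V := h5
            _ ≤ ε * V := mul_le_mul_of_nonneg_right (le_trans h2 (le_trans h3 h4)) hVpos.le
        linarith
      subst hd1
      -- clean up d = 1 artifacts
      have hε8 : ε < 1/8 := by norm_num at hε'; linarith only [hε']
      have hAV1 : A ≤ (1+ε)*V := by rw [pow_one] at hAV; exact hAV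
      have hAS1 : A ≤ (1+ε)*S := by rw [pow_one] at hAS; exact hAS
      have hth_mul1 : th * (1+ε) = 1 - 3*ε := by
        have h := hth_mul; rw [pow_one] at h; push_cast at h; linarith
      have hTsimp : V - 2*((1:ℕ):ℝ)*ε*V = V - 2*ε*V := by norm_num
      rw [hTsimp] at hcPre hcPreo ⊢
      have hco_up : c o ≤ (1+ε)*ε*V := by
        have h := hcεV o hoI; rw [pow_one] at h; linarith
      -- all big items have the same rounded size
      have hbig_eq : ∀ i ∈ I, ε * V < c i → c i = c o := by
        intro i hi hbi
        have hrep : ∀ k ∈ I, c k = ((1:ℝ)+ε) ^ (⌈Real.logb (1+ε) (s k)⌉) := by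
          intro k hk
          rw [← hcdef k, pow_one, ceilPow]
        have hub : ∀ k ∈ I, c k ≤ (1+ε)*(ε*V) := by
          intro k hk
          have h := hcεV k hk; rw [pow_one] at h; linarith [le_of_eq (by ring :
            ((1+ε)*ε)*V = (1+ε)*(ε*V))]
        have heq : ((1:ℝ)+ε) ^ (⌈Real.logb (1+ε) (s i)⌉) = ((1:ℝ)+ε) ^ (⌈Real.logb (1+ε) (s o)⌉) := by
          apply pow_interval_eq hε (by positivity : (0:ℝ) < ε*V)
          · rw [← hrep i hi]; exact hbi
          · rw [← hrep i hi]; exact hub i hi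
          · rw [← hrep o hoI]; exact hbig
          · rw [← hrep o hoI]; exact hub o hoI
        rw [hrep i hi, hrep o hoI, heq]
      -- split Out into small and big items
      set Sm : Finset ι := Out.filter (fun j => c j ≤ ε * V) with hSmdef
      set Bg : Finset ι := Out.filter (fun j => ¬ (c j ≤ ε * V)) with hBgdef
      have hSmOut : Sm ⊆ Out := Finset.filter_subset _ _
      have hBgOut : Bg ⊆ Out := Finset.filter_subset _ _
      have hOsum : ∀ f : ι → ℝ, ∑ i ∈ Out, f i = ∑ i ∈ Sm, f i + ∑ i ∈ Bg, f i :=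
        fun f => (Finset.sum_filter_add_sum_filter_not Out _ f).symm
      obtain ⟨CSm, hCSm⟩ : ∃ x : ℝ, ∑ i ∈ Sm, c i = x := ⟨_, rfl⟩
      obtain ⟨PSm, hPSm⟩ : ∃ x : ℝ, ∑ i ∈ Sm, p i = x := ⟨_, rfl⟩
      obtain ⟨PBg, hPBg⟩ : ∃ x : ℝ, ∑ i ∈ Bg, p i = x := ⟨_, rfl⟩
      have hCOsplit : CO = CSm + ∑ i ∈ Bg, c i := by rw [← hCO, hOsum c, hCSm]
      have hPOsplit : PO = PSm + PBg := by rw [← hPO, hOsum p, hPSm, hPBg]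
      -- big items outside: same size, smaller profit
      have hBgc : ∀ j ∈ Bg, c j = c o := by
        intro j hj
        have h1 := Finset.mem_filter.1 hj
        exact hbig_eq j (hOutI j (hBgOut hj)).1 (not_le.1 h1.2)
      have hBgp : ∀ j ∈ Bg, p j ≤ p o := by
        intro j hj
        have h1 := hdX j (hOutI j (hBgOut hj)).1 (hOutI j (hBgOut hj)).2
        rw [hBgc j hj] at h1
        exact le_of_mul_le_mul_right h1 hco0
      have hCBg : ∑ i ∈ Bg, c i = (Bg.card : ℝ) * c o := by
        rw [Finset.sum_congr rfl hBgc, Finset.sum_const, nsmul_eq_mul]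
      have hCSm0 : 0 ≤ CSm :=
        hCSm ▸ Finset.sum_nonneg (fun i hi => (hcpos i (hOutI i (hSmOut hi)).1).le)
      have hPSm0 : 0 ≤ PSm :=
        hPSm ▸ Finset.sum_nonneg (fun i hi => hp i (hOutI i (hSmOut hi)).1)
      -- at most 2 big items outside
      have hBgcard : (Bg.card : ℝ) ≤ 2 := by
        have h1 : (Bg.card : ℝ) * c o ≤ A - CP - c o - CSm := by
          rw [← hCBg]
          have := hAsplit
          rw [hCOsplit] at this
          linarith
        have h2 : (Bg.card : ℝ) * c o < 3 * c o := by
          have h3 : A - CP - c o - CSm ≤ (1+ε)*V - (V - 2*ε*V - c o) - c o - 0 := by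
            linarith only [hAV1, hcPreo, hCSm0]
          have h4 : (1+ε)*V - (V - 2*ε*V - c o) - c o - 0 = 3*(ε*V) := by ring
          linarith only [h1, h3, h4, hbig]
        have h5 : (Bg.card : ℝ) < 3 := lt_of_mul_lt_mul_right h2 hco0.le
        have h6 : Bg.card < 3 := by exact_mod_cast h5
        have h7 : Bg.card ≤ 2 := by omega
        exact_mod_cast h7
      have hPBg_le : PBg ≤ (Bg.card : ℝ) * p o := by
        rw [← hPBg]
        calc ∑ i ∈ Bg, p i ≤ Bg.card • p o := Finset.sum_le_card_nsmul Bg p (p o) (fun j hj => hBgp j hj)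
          _ = (Bg.card : ℝ) * p o := nsmul_eq_mul _ _
      have hPBg3 : p o + PBg ≤ 3 * p o := by
        have h1 : (Bg.card : ℝ) * p o ≤ 2 * p o := mul_le_mul_of_nonneg_right hBgcard hpo0
        linarith only [hPBg_le, h1]
      -- the key numeric inequality
      have y6 : 3*(1-3*ε)*c o ≤ 4*ε*CP := by
        have h1 : V - 2*ε*V - c o ≤ CP := by linarith [hcPreo]
        have yA : (4*ε)*(V - 2*ε*V - c o) ≤ (4*ε)*CP :=
          mul_le_mul_of_nonneg_left h1 (by linarith)
        have yB : (3-5*ε)*(c o) ≤ (3-5*ε)*((1+ε)*ε*V) :=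
          mul_le_mul_of_nonneg_left hco_up (by linarith)
        have yC : 0 ≤ (1-6*ε+5*ε^2)*(ε*V) := by
          apply mul_nonneg _ (by positivity)
          have t1 : 0 ≤ (1-ε)*(1-5*ε) :=
            mul_nonneg (by linarith only [hε8]) (by linarith only [hε8])
          nlinarith only [t1]
        linarith only [yA, yB, yC]
      have h1th : (0:ℝ) ≤ 1 - th := by linarith
      have g1 : 3*(th*c o) ≤ (1-th)*CP := by
        have h2' : (1-th)*(1+ε) = 4*ε := by linear_combination -hth_mul1
        have h3 : (3*(th*c o))*(1+ε) ≤ ((1-th)*CP)*(1+ε) := by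
          calc (3*(th*c o))*(1+ε) = 3*(th*(1+ε))*c o := by ring
            _ = 3*(1-3*ε)*c o := by rw [hth_mul1]
            _ ≤ 4*ε*CP := y6
            _ = ((1-th)*(1+ε))*CP := by rw [h2']
            _ = ((1-th)*CP)*(1+ε) := by ring
        exact le_of_mul_le_mul_right h3 (by linarith only [hε])
      have g3 : 3*(th*p o) ≤ (1-th)*PP := by
        have e2 : (1-th)*(p o * CP) ≤ (1-th)*(PP * c o) :=
          mul_le_mul_of_nonneg_left hf1 h1th
        have e4 : p o * (3*(th*c o)) ≤ p o * ((1-th)*CP) :=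
          mul_le_mul_of_nonneg_left g1 hpo0
        have e5 : (3*(th*p o))*c o ≤ ((1-th)*PP)*c o := by linarith only [e2, e4]
        exact le_of_mul_le_mul_right e5 hco0
      -- greedy selection within the small items outside
      have hcposSm : ∀ i ∈ Sm, 0 < c i := fun i hi => hcpos i (hOutI i (hSmOut hi)).1
      have ht2 : (0:ℝ) ≤ V - 2*ε*V - CP := by linarith only [hcPre]
      have hSmI : Sm ⊆ I := fun i hi => (hOutI i (hSmOut hi)).1
      have hdisjPS : Disjoint Pre Sm := by
        apply Finset.disjoint_left.2
        intro a haP haS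
        exact (hOutI a (hSmOut haS)).2 haP
      rcases greedy_select c p Sm hcposSm (V - 2*ε*V - CP) ht2 with hAll |
        ⟨L, w, hLSm, hwSm, hwL, hcL, hcLw, hdL2, hdX2⟩
      · -- all small items fit: take Pre ∪ Sm
        refine ⟨Pre ∪ Sm, Finset.union_subset hPreI hSmI, ?_, ?_⟩
        · rw [Finset.sum_union hdisjPS, hPP, hPSm, hPOsplit]
          have e6 : th*(p o + PBg) ≤ th*(3*p o) :=
            mul_le_mul_of_nonneg_left hPBg3 hth_pos
          have e7 : th*PSm ≤ 1*PSm := mul_le_mul_of_nonneg_right hth1 hPSm0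
          linarith only [g3, e6, e7]
        · rw [Finset.sum_union hdisjPS, hCP, hCSm]
          rw [hCSm] at hAll
          linarith only [hAll]
      · -- greedy stopped at a small pivot w : take Pre ∪ L
        have hLI : L ⊆ I := fun i hi => hSmI (hLSm hi)
        have hdisjPL : Disjoint Pre L := hdisjPS.mono_right hLSm
        obtain ⟨CL, hCL⟩ : ∃ x : ℝ, ∑ i ∈ L, c i = x := ⟨_, rfl⟩
        obtain ⟨PL, hPL⟩ : ∃ x : ℝ, ∑ i ∈ L, p i = x := ⟨_, rfl⟩
        obtain ⟨CSt, hCSt⟩ : ∃ x : ℝ, ∑ i ∈ Sm \ L, c i = x := ⟨_, rfl⟩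
        obtain ⟨PSt, hPSt⟩ : ∃ x : ℝ, ∑ i ∈ Sm \ L, p i = x := ⟨_, rfl⟩
        rw [hCL] at hcL hcLw
        have hCSmsplit : CSm = CSt + CL := by
          rw [← hCSm, ← hCSt, ← hCL, ← Finset.sum_sdiff hLSm]
        have hPSmsplit : PSm = PSt + PL := by
          rw [← hPSm, ← hPSt, ← hPL, ← Finset.sum_sdiff hLSm]
        have hwI : w ∈ I := hSmI hwSm
        have hpw0 : 0 ≤ p w := hp w hwI
        have hcw0 : 0 < c w := hcpos w hwI
        have hcwεV : c w ≤ ε * V := (Finset.mem_filter.1 hwSm).2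
        have hPL0 : 0 ≤ PL := hPL ▸ Finset.sum_nonneg (fun i hi => hp i (hLI hi))
        have hCL0 : 0 ≤ CL := hCL ▸ Finset.sum_nonneg (fun i hi => (hcpos i (hLI hi)).le)
        have hCSt0 : 0 ≤ CSt := hCSt ▸ Finset.sum_nonneg
          (fun i hi => (hcpos i (hSmI (Finset.mem_sdiff.1 hi).1)).le)
        -- density sums for L and the tail
        have y2 : p w * CL ≤ PL * c w := by
          rw [← hCL, ← hPL, Finset.mul_sum, Finset.sum_mul]
          exact Finset.sum_le_sum (fun i hi => hdL2 i hi)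
        have y3 : PSt * c w ≤ p w * CSt := by
          rw [← hCSt, ← hPSt, Finset.mul_sum, Finset.sum_mul]
          refine Finset.sum_le_sum (fun i hi => ?_)
          have h1 := Finset.mem_sdiff.1 hi
          exact hdX2 i h1.1 h1.2
        have y4 : p w * c o ≤ p o * c w := hdX w hwI (hOutI w (hSmOut hwSm)).2
        -- mass bound : the selected mass nearly exhausts A
        have z3 : th * A ≤ CP + CL := by
          have h1 : V - 2*ε*V - CP < CL + c w := hcLw
          have h2 : CP + CL > (1-3*ε)*V := by linarith only [h1, hcwεV]
          have h3 : th*A ≤ (1-3*ε)*S := by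
            calc th*A ≤ th*((1+ε)*S) := mul_le_mul_of_nonneg_left hAS1 hth_pos
              _ = (th*(1+ε))*S := by ring
              _ = (1-3*ε)*S := by rw [hth_mul1]
          have h4 : (1-3*ε)*S ≤ (1-3*ε)*V := by
            apply mul_le_mul_of_nonneg_left hvol (by linarith only [hε8])
          linarith only [h2, h3, h4]
        set r : ℝ := (Bg.card : ℝ) with hrdef
        have hr0 : 0 ≤ r := Nat.cast_nonneg _
        have hr2 : r ≤ 2 := hBgcard
        have hAexp : A = CP + c o + (CSt + CL + r * c o) := by
          rw [hAsplit, hCOsplit, hCBg, hCSmsplit, hrdef]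
        -- final assembly
        refine ⟨Pre ∪ L, Finset.union_subset hPreI hLI, ?_, ?_⟩
        · rw [Finset.sum_union hdisjPL, hPP, hPL, hPOsplit, hPSmsplit]
          -- want: th*(PP + p o + (PSt + PL + PBg)) ≤ PP + PL
          have hcocw : (0:ℝ) < c o * c w := mul_pos hco0 hcw0
          have M1 : (1-th)*(p o*CP)*c w ≤ (1-th)*(PP*c o)*c w :=
            mul_le_mul_of_nonneg_right (mul_le_mul_of_nonneg_left hf1 h1th) hcw0.le
          have M2 : (1-th)*(p w*CL)*c o ≤ (1-th)*(PL*c w)*c o :=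
            mul_le_mul_of_nonneg_right (mul_le_mul_of_nonneg_left y2 h1th) hco0.le
          have M3 : th*(PSt*c w)*c o ≤ th*(p w*CSt)*c o :=
            mul_le_mul_of_nonneg_right (mul_le_mul_of_nonneg_left y3 hth_pos) hco0.le
          have M4 : th*(p o+PBg)*(c o*c w) ≤ th*((1+r)*p o)*(c o*c w) := by
            apply mul_le_mul_of_nonneg_right _ hcocw.le
            apply mul_le_mul_of_nonneg_left _ hth_pos
            have h1 : r * p o ≤ 2 * p o := mul_le_mul_of_nonneg_right hr2 hpo0
            linarith only [hPBg_le, h1]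
          have q2 : 0 ≤ (1-th)*CP - (1+r)*(th*c o) := by
            have h1 : r * (th*c o) ≤ 2 * (th*c o) :=
              mul_le_mul_of_nonneg_right hr2 (mul_nonneg hth_pos hco0.le)
            linarith only [g1, h1]
          have s1 : ((1-th)*CP - (1+r)*(th*c o)) * (p w * c o) ≤
              ((1-th)*CP - (1+r)*(th*c o)) * (p o * c w) :=
            mul_le_mul_of_nonneg_left y4 q2
          have s2 : 0 ≤ (p w * c o) * ((CP+CL) - th*(CP + c o + (CSt + CL + r*c o))) := by
            apply mul_nonneg (mul_nonneg hpw0 hco0.le)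
            rw [← hAexp]; linarith only [z3]
          have hgoal2 : (th*(PP + p o + (PSt + PL + PBg)))*(c o*c w) ≤
              (PP + PL)*(c o*c w) := by
            linarith only [M1, M2, M3, M4, s1, s2]
          exact le_of_mul_le_mul_right hgoal2 hcocw
        · rw [Finset.sum_union hdisjPL, hCP, hCL]
          linarith only [hcL]
end
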